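/- arXiv:2204.02087 — 3 statements merged into one kernel-verified Lean document; each statement's English description precedes it below -/
import Mathlib

section
/- Let λ ∈ ℝ^n with λ_1 > 0 > λ_n and x⁰ ∈ ℝ^n with all x⁰_i > 0, and set e₁ = −1/λ_1, e₂ = −1/λ_n. The function f(μ) = Σ_i λ_i (x⁰_i/(1 + μ λ_i))² − 1 has exactly one zero on (e₁, e₂). -/
set_option maxHeartbeats 1000000 in
theorem stmt_8 (n : ℕ) (hn : 0 < n) (lam x0 : Fin n → ℝ)
    (hsort : ∀ i j : Fin n, i ≤ j → lam j ≤ lam i)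
    (hne : ∀ i, lam i ≠ 0)
    (hfirst : 0 < lam ⟨0, hn⟩) (hlast : lam ⟨n - 1, Nat.sub_lt hn one_pos⟩ < 0)
    (hx0 : ∀ i, 0 < x0 i) :
    ∃! μ : ℝ, μ ∈ Set.Ioo (-1 / lam ⟨0, hn⟩) (-1 / lam ⟨n - 1, Nat.sub_lt hn one_pos⟩) ∧
      ∑ i, lam i * (x0 i / (1 + μ * lam i)) ^ 2 - 1 = 0 := by
  set i0 : Fin n := ⟨0, hn⟩ with hi0
  set iN : Fin n := ⟨n - 1, Nat.sub_lt hn one_pos⟩ with hiN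
  set e1 : ℝ := -1 / lam i0 with he1
  set e2 : ℝ := -1 / lam iN with he2
  set f : ℝ → ℝ := fun μ => ∑ i, lam i * (x0 i / (1 + μ * lam i)) ^ 2 - 1 with hf
  have hl0 : 0 < lam i0 := hfirst
  have hlN : lam iN < 0 := hlast
  have he1neg : e1 < 0 := by rw [he1]; exact div_neg_of_neg_of_pos (by norm_num) hl0
  have he2pos : 0 < e2 := by rw [he2]; exact div_pos_of_neg_of_neg (by norm_num) hlN
  have hle : ∀ i, lam i ≤ lam i0 := fun i => hsort i0 i (by simp [hi0, Fin.le_def])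
  have hge : ∀ i, lam iN ≤ lam i := fun i => by
    refine hsort i iN ?_
    have h := i.isLt
    simp only [hiN, Fin.le_def]
    omega
  clear_value i0 iN e1 e2
  -- positivity of denominators
  have hpos : ∀ μ, e1 < μ → μ < e2 → ∀ i, 0 < 1 + μ * lam i := by
    intro μ h1 h2 i
    rcases (hne i).lt_or_gt with h | h
    · have h3 := hge i
      have hμN : -1 < μ * lam iN := by
        rw [he2] at h2
        have := (lt_div_iff_of_neg hlN).mp h2
        linarith
      rcases le_or_gt 0 μ with hμ | hμ
      · have := mul_le_mul_of_nonneg_left h3 hμ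
        nlinarith
      · nlinarith
    · have h3 := hle i
      have hμ0 : -1 < μ * lam i0 := by
        rw [he1] at h1
        have := (div_lt_iff₀ hl0).mp h1
        linarith
      rcases le_or_gt 0 μ with hμ | hμ
      · nlinarith
      · have := mul_le_mul_of_nonpos_left h3 hμ.le
        nlinarith
  -- continuity
  have hcont : ContinuousOn f (Set.Ioo e1 e2) := by
    apply ContinuousOn.sub _ continuousOn_const
    apply continuousOn_finset_sum
    intro i _
    apply ContinuousOn.mul continuousOn_const
    apply ContinuousOn.pow
    apply ContinuousOn.div continuousOn_const
    · exact (continuous_const.add (continuous_id.mul continuous_const)).continuousOn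
    · intro μ hμ
      exact ne_of_gt (hpos μ hμ.1 hμ.2 i)
  -- strict decrease
  have hanti : ∀ p q, e1 < p → p < q → q < e2 → f q < f p := by
    intro p q hp hpq hq
    have hp2 : p < e2 := lt_trans hpq hq
    have hq1 : e1 < q := lt_trans hp hpq
    have hsum : ∑ i, lam i * (x0 i / (1 + q * lam i)) ^ 2 <
        ∑ i, lam i * (x0 i / (1 + p * lam i)) ^ 2 := by
      have hnonempty : (Finset.univ : Finset (Fin n)).Nonempty := ⟨i0, Finset.mem_univ i0⟩
      refine Finset.sum_lt_sum_of_nonempty hnonempty ?_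
      intro i _
      have hu := hpos p hp hp2 i
      have hv := hpos q hq1 hq i
      rw [div_pow, div_pow, ← mul_div_assoc, ← mul_div_assoc,
        div_lt_div_iff₀ (by positivity) (by positivity)]
      have hl2 : 0 < lam i ^ 2 :=
        lt_of_le_of_ne (sq_nonneg _) (Ne.symm (pow_ne_zero 2 (hne i)))
      have hident : lam i * x0 i ^ 2 * (1 + q * lam i) ^ 2 -
          lam i * x0 i ^ 2 * (1 + p * lam i) ^ 2 =
          x0 i ^ 2 * lam i ^ 2 * (q - p) * ((1 + p * lam i) + (1 + q * lam i)) := by ring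
      have hprod : 0 < x0 i ^ 2 * lam i ^ 2 * (q - p) * ((1 + p * lam i) + (1 + q * lam i)) :=
        mul_pos (mul_pos (mul_pos (pow_pos (hx0 i) 2) hl2) (by linarith)) (by linarith)
      linarith
    simp only [hf]
    linarith
  -- the constant C
  set C : ℝ := ∑ i, |lam i| * x0 i ^ 2 with hC
  clear_value C
  have hC0 : 0 ≤ C := hC ▸ Finset.sum_nonneg fun i _ => by positivity
  -- lower bound for μ ≤ 0
  have hlow : ∀ μ, e1 < μ → μ ≤ 0 →
      lam i0 * (x0 i0 / (1 + μ * lam i0)) ^ 2 - C ≤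
        ∑ i, lam i * (x0 i / (1 + μ * lam i)) ^ 2 := by
    intro μ h1 h2
    have key : ∀ i : Fin n, -(|lam i| * x0 i ^ 2) ≤ lam i * (x0 i / (1 + μ * lam i)) ^ 2 := by
      intro i
      rcases (hne i).lt_or_gt with h | h
      · have hd : 1 ≤ 1 + μ * lam i := by nlinarith
        have hsq : (x0 i / (1 + μ * lam i)) ^ 2 ≤ x0 i ^ 2 := by
          rw [div_pow]
          exact div_le_self (sq_nonneg _) (by nlinarith)
        rw [abs_of_neg h]
        have := mul_le_mul_of_nonpos_left hsq (le_of_lt h)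
        linarith
      · have h1' : 0 ≤ lam i * (x0 i / (1 + μ * lam i)) ^ 2 := mul_nonneg h.le (sq_nonneg _)
        have h2' : 0 ≤ |lam i| * x0 i ^ 2 := by positivity
        linarith
    rw [← Finset.add_sum_erase _ _ (Finset.mem_univ i0)]
    have h3 : ∑ i ∈ Finset.univ.erase i0, -(|lam i| * x0 i ^ 2) ≤
        ∑ i ∈ Finset.univ.erase i0, lam i * (x0 i / (1 + μ * lam i)) ^ 2 :=
      Finset.sum_le_sum fun i _ => key i
    have h4 : ∑ i ∈ Finset.univ.erase i0, (|lam i| * x0 i ^ 2) ≤ C :=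
      le_of_le_of_eq (Finset.sum_le_sum_of_subset_of_nonneg (Finset.subset_univ _)
        (fun i _ _ => by positivity)) hC.symm
    rw [Finset.sum_neg_distrib] at h3
    linarith
  -- upper bound for μ ≥ 0
  have hup : ∀ μ, 0 ≤ μ → μ < e2 →
      ∑ i, lam i * (x0 i / (1 + μ * lam i)) ^ 2 ≤
        lam iN * (x0 iN / (1 + μ * lam iN)) ^ 2 + C := by
    intro μ h1 h2
    have key : ∀ i : Fin n, lam i * (x0 i / (1 + μ * lam i)) ^ 2 ≤ |lam i| * x0 i ^ 2 := by
      intro i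
      rcases (hne i).lt_or_gt with h | h
      · have h1' : lam i * (x0 i / (1 + μ * lam i)) ^ 2 ≤ 0 :=
          mul_nonpos_of_nonpos_of_nonneg h.le (sq_nonneg _)
        have h2' : 0 ≤ |lam i| * x0 i ^ 2 := by positivity
        linarith
      · have hd : 1 ≤ 1 + μ * lam i := by nlinarith
        have hsq : (x0 i / (1 + μ * lam i)) ^ 2 ≤ x0 i ^ 2 := by
          rw [div_pow]
          exact div_le_self (sq_nonneg _) (by nlinarith)
        rw [abs_of_pos h]
        exact mul_le_mul_of_nonneg_left hsq h.le
    rw [← Finset.add_sum_erase _ _ (Finset.mem_univ iN)]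
    have h3 : ∑ i ∈ Finset.univ.erase iN, lam i * (x0 i / (1 + μ * lam i)) ^ 2 ≤
        ∑ i ∈ Finset.univ.erase iN, (|lam i| * x0 i ^ 2) :=
      Finset.sum_le_sum fun i _ => key i
    have h4 : ∑ i ∈ Finset.univ.erase iN, (|lam i| * x0 i ^ 2) ≤ C :=
      le_of_le_of_eq (Finset.sum_le_sum_of_subset_of_nonneg (Finset.subset_univ _)
        (fun i _ _ => by positivity)) hC.symm
    linarith
  -- choose a near e1
  have hC1 : (0:ℝ) < C + 1 := by linarith
  obtain ⟨ε, hεpos, hεhalf, hε2⟩ :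
      ∃ ε : ℝ, 0 < ε ∧ ε ≤ -e1 / 2 ∧ ε ^ 2 < x0 i0 ^ 2 / (lam i0 * (C + 1)) := by
    have hspos : 0 < x0 i0 / Real.sqrt (lam i0 * (C + 1)) :=
      div_pos (hx0 i0) (Real.sqrt_pos.mpr (by positivity))
    refine ⟨min (-e1 / 2) (x0 i0 / Real.sqrt (lam i0 * (C + 1)) / 2),
      lt_min (by linarith) (by linarith), min_le_left _ _, ?_⟩
    have h1 : min (-e1 / 2) (x0 i0 / Real.sqrt (lam i0 * (C + 1)) / 2) ≤
        x0 i0 / Real.sqrt (lam i0 * (C + 1)) / 2 := min_le_right _ _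
    have h0 : 0 < min (-e1 / 2) (x0 i0 / Real.sqrt (lam i0 * (C + 1)) / 2) :=
      lt_min (by linarith) (by linarith)
    have h2 : (x0 i0 / Real.sqrt (lam i0 * (C + 1))) ^ 2 = x0 i0 ^ 2 / (lam i0 * (C + 1)) := by
      rw [div_pow, Real.sq_sqrt (by positivity)]
    nlinarith
  have ha1 : e1 < e1 + ε := by linarith
  have ha0 : e1 + ε ≤ e1 / 2 := by linarith
  have ha0' : e1 + ε ≤ 0 := by linarith
  have hda : 1 + (e1 + ε) * lam i0 = ε * lam i0 := by
    rw [he1]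
    field_simp [hne i0]
    ring
  have hterm0 : C + 1 < lam i0 * (x0 i0 / (1 + (e1 + ε) * lam i0)) ^ 2 := by
    rw [hda, div_pow, mul_pow, mul_div_assoc',
      lt_div_iff₀ (mul_pos (pow_pos hεpos 2) (pow_pos hl0 2))]
    have h1 := (lt_div_iff₀ (mul_pos hl0 hC1)).mp hε2
    have h2 := mul_lt_mul_of_pos_right h1 hl0
    calc (C + 1) * (ε ^ 2 * lam i0 ^ 2) = ε ^ 2 * (lam i0 * (C + 1)) * lam i0 := by ring
      _ < x0 i0 ^ 2 * lam i0 := h2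
      _ = lam i0 * x0 i0 ^ 2 := by ring
  have hfa : 0 < f (e1 + ε) := by
    have h1 := hlow (e1 + ε) ha1 ha0'
    simp only [hf]
    linarith
  -- choose b near e2
  obtain ⟨ε', hε'pos, hε'half, hε'2⟩ :
      ∃ ε' : ℝ, 0 < ε' ∧ ε' ≤ e2 / 2 ∧ ε' ^ 2 < x0 iN ^ 2 / (-lam iN * (C + 1)) := by
    have hNpos : (0:ℝ) < -lam iN * (C + 1) := mul_pos (by linarith) hC1
    have hspos : 0 < x0 iN / Real.sqrt (-lam iN * (C + 1)) :=
      div_pos (hx0 iN) (Real.sqrt_pos.mpr hNpos)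
    refine ⟨min (e2 / 2) (x0 iN / Real.sqrt (-lam iN * (C + 1)) / 2),
      lt_min (by linarith) (by linarith), min_le_left _ _, ?_⟩
    have h1 : min (e2 / 2) (x0 iN / Real.sqrt (-lam iN * (C + 1)) / 2) ≤
        x0 iN / Real.sqrt (-lam iN * (C + 1)) / 2 := min_le_right _ _
    have h0 : 0 < min (e2 / 2) (x0 iN / Real.sqrt (-lam iN * (C + 1)) / 2) :=
      lt_min (by linarith) (by linarith)
    have h2 : (x0 iN / Real.sqrt (-lam iN * (C + 1))) ^ 2 = x0 iN ^ 2 / (-lam iN * (C + 1)) := by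
      rw [div_pow, Real.sq_sqrt hNpos.le]
    nlinarith
  have hb2 : e2 - ε' < e2 := by linarith
  have hb0 : e2 / 2 ≤ e2 - ε' := by linarith
  have hb0' : 0 ≤ e2 - ε' := by linarith
  have hdb : 1 + (e2 - ε') * lam iN = ε' * -lam iN := by
    rw [he2]
    field_simp [hne iN]
    ring
  have htermN : lam iN * (x0 iN / (1 + (e2 - ε') * lam iN)) ^ 2 < -(C + 1) := by
    have hNpos : (0:ℝ) < -lam iN := by linarith
    rw [hdb, div_pow, mul_pow, mul_div_assoc']
    rw [div_lt_iff₀ (mul_pos (pow_pos hε'pos 2) (pow_pos hNpos 2))]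
    have h1 := (lt_div_iff₀ (mul_pos hNpos hC1)).mp hε'2
    have h2 := mul_lt_mul_of_pos_right h1 hNpos
    calc lam iN * x0 iN ^ 2 = -(x0 iN ^ 2 * -lam iN) := by ring
      _ < -(ε' ^ 2 * (-lam iN * (C + 1)) * -lam iN) := by linarith
      _ = -(C + 1) * (ε' ^ 2 * (-lam iN) ^ 2) := by ring
  have hfb : f (e2 - ε') < 0 := by
    have h1 := hup (e2 - ε') hb0' hb2
    simp only [hf]
    linarith
  set a : ℝ := e1 + ε with ha
  set b : ℝ := e2 - ε' with hb
  -- IVT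
  have hab : a < b := by linarith
  have hsub : Set.Icc a b ⊆ Set.Ioo e1 e2 := fun x hx =>
    ⟨lt_of_lt_of_le ha1 hx.1, lt_of_le_of_lt hx.2 hb2⟩
  obtain ⟨c, hc, hfc⟩ := intermediate_value_Ioo' hab.le (hcont.mono hsub) ⟨hfb, hfa⟩
  have hc1 : e1 < c := lt_trans ha1 hc.1
  have hc2 : c < e2 := lt_trans hc.2 hb2
  refine ⟨c, ⟨⟨hc1, hc2⟩, hfc⟩, ?_⟩
  rintro y ⟨⟨hy1, hy2⟩, hy3⟩
  have hy3' : f y = 0 := hy3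
  by_contra hcy
  rcases lt_or_gt_of_ne hcy with h | h
  · have := hanti y c hy1 h hc2
    rw [hfc, hy3'] at this
    exact lt_irrefl _ this
  · have := hanti c y hc1 h hy2
    rw [hfc, hy3'] at this
    exact lt_irrefl _ this
end

section
/- Let λ ∈ ℝ^n with λ_1 > 0 > λ_n and x⁰ ∈ ℝ^n with all x⁰_i > 0. The function f(μ) = Σ_i λ_i (x⁰_i/(1 + μ λ_i))² − 1 has exactly one inflexion point on (e₁, e₂) = (−1/λ_1, −1/λ_n): there is a unique μ^I ∈ (e₁, e₂) with f''(μ^I) = 0. -/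
set_option maxHeartbeats 1000000

open Filter Set

theorem stmt_10 (n : ℕ) (hn : 0 < n) (lam x0 : Fin n → ℝ)
    (hsort : ∀ i j : Fin n, i ≤ j → lam j ≤ lam i)
    (hne : ∀ i, lam i ≠ 0)
    (hfirst : 0 < lam ⟨0, hn⟩) (hlast : lam ⟨n - 1, Nat.sub_lt hn one_pos⟩ < 0)
    (hx0 : ∀ i, 0 < x0 i) :
    ∃! μ : ℝ, μ ∈ Set.Ioo (-1 / lam ⟨0, hn⟩) (-1 / lam ⟨n - 1, Nat.sub_lt hn one_pos⟩) ∧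
      deriv (deriv (fun t : ℝ => ∑ i, lam i * (x0 i / (1 + t * lam i)) ^ 2 - 1)) μ = 0 := by
  set i0 : Fin n := ⟨0, hn⟩ with hi0
  set iN : Fin n := ⟨n - 1, Nat.sub_lt hn one_pos⟩ with hiN
  set e1 : ℝ := -1 / lam i0 with he1def
  set e2 : ℝ := -1 / lam iN with he2def
  have hli : ∀ i, lam i ≤ lam i0 := fun i => hsort i0 i (by simp [hi0, Fin.le_def])
  have hgi : ∀ i, lam iN ≤ lam i := fun i =>
    hsort i iN (by simp [hiN, Fin.le_def]; omega)
  have he1 : e1 < 0 := div_neg_of_neg_of_pos (by norm_num) hfirst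
  have he2 : 0 < e2 := div_pos_of_neg_of_neg (by norm_num) hlast
  have he12 : e1 < e2 := he1.trans he2
  -- positivity of all denominators on the interval
  have hpos : ∀ μ ∈ Set.Ioo e1 e2, ∀ i, 0 < 1 + μ * lam i := by
    intro μ hμ i
    rcases (hne i).lt_or_gt with hneg | hposi
    · have h1 : -1 < μ * lam iN := by
        have := hμ.2
        rw [he2def, lt_div_iff_of_neg hlast] at this
        linarith
      nlinarith [hgi i, mul_pos (show (0:ℝ) < 1 + μ * lam iN by linarith) (neg_pos.mpr hneg)]
    · have h1 : -1 < μ * lam i0 := by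
        have := hμ.1
        rw [he1def, div_lt_iff₀ hfirst] at this
        linarith
      nlinarith [hli i, mul_pos (show (0:ℝ) < 1 + μ * lam i0 by linarith) hposi]
  set f : ℝ → ℝ := fun t => ∑ i, lam i * (x0 i / (1 + t * lam i)) ^ 2 - 1 with hfdef
  set f1 : ℝ → ℝ := fun t => ∑ i, (-2) * lam i ^ 2 * x0 i ^ 2 / (1 + t * lam i) ^ 3 with hf1def
  set g : ℝ → ℝ := fun t => ∑ i, 6 * lam i ^ 3 * x0 i ^ 2 / (1 + t * lam i) ^ 4 with hgdef
  have hu : ∀ (i : Fin n) (μ : ℝ), HasDerivAt (fun t : ℝ => 1 + t * lam i) (lam i) μ := by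
    intro i μ
    simpa using ((hasDerivAt_id μ).mul_const (lam i)).const_add 1
  -- first derivative
  have hdf : ∀ μ ∈ Set.Ioo e1 e2, HasDerivAt f (f1 μ) μ := by
    intro μ hμ
    have hsum : HasDerivAt (fun t : ℝ => ∑ i, lam i * (x0 i / (1 + t * lam i)) ^ 2)
        (∑ i, (-2) * lam i ^ 2 * x0 i ^ 2 / (1 + μ * lam i) ^ 3) μ := by
      refine HasDerivAt.fun_sum (𝕜 := ℝ) (F := ℝ) fun i _ => ?_
      have hu0 : (1 + μ * lam i) ≠ 0 := (hpos μ hμ i).ne'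
      have hd : HasDerivAt (fun t : ℝ => x0 i / (1 + t * lam i))
          ((0 * (1 + μ * lam i) - x0 i * lam i) / (1 + μ * lam i) ^ 2) μ :=
        (hasDerivAt_const μ (x0 i)).div (hu i μ) hu0
      have := (hd.pow 2).const_mul (lam i)
      refine this.congr_deriv ?_
      norm_num
      field_simp
    exact hsum.sub_const 1
  -- second derivative
  have hdf1 : ∀ μ ∈ Set.Ioo e1 e2, HasDerivAt f1 (g μ) μ := by
    intro μ hμ
    refine HasDerivAt.fun_sum (𝕜 := ℝ) (F := ℝ) fun i _ => ?_
    have hu0 : (1 + μ * lam i) ≠ 0 := (hpos μ hμ i).ne'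
    have hd : HasDerivAt (fun t : ℝ => (-2) * lam i ^ 2 * x0 i ^ 2 / (1 + t * lam i) ^ 3)
        ((0 * (1 + μ * lam i) ^ 3 - (-2) * lam i ^ 2 * x0 i ^ 2 *
          (3 * (1 + μ * lam i) ^ 2 * lam i)) / ((1 + μ * lam i) ^ 3) ^ 2) μ :=
      (hasDerivAt_const μ _).div ((hu i μ).pow 3) (pow_ne_zero 3 hu0)
    refine hd.congr_deriv ?_
    field_simp
    ring
  have hIopen : IsOpen (Set.Ioo e1 e2) := isOpen_Ioo
  have hdd : ∀ μ ∈ Set.Ioo e1 e2,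
      deriv (deriv f) μ = g μ := by
    intro μ hμ
    have hev : deriv f =ᶠ[nhds μ] f1 :=
      Filter.eventuallyEq_of_mem (hIopen.mem_nhds hμ) (fun t ht => (hdf t ht).deriv)
    rw [hev.deriv_eq]
    exact (hdf1 μ hμ).deriv
  -- strict antitonicity of g
  have hanti : StrictAntiOn g (Set.Ioo e1 e2) := by
    intro a ha b hb hab
    refine Finset.sum_lt_sum_of_nonempty (Finset.univ_nonempty_iff.mpr ⟨i0⟩) ?_
    intro i _
    have hua : 0 < 1 + a * lam i := hpos a ha i
    have hub : 0 < 1 + b * lam i := hpos b hb i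
    rcases (hne i).lt_or_gt with hneg | hposi
    · have hlt : 1 + b * lam i < 1 + a * lam i := by nlinarith
      have h4 : (1 + b * lam i) ^ 4 < (1 + a * lam i) ^ 4 :=
        pow_lt_pow_left₀ hlt hub.le (by norm_num)
      have hl3 : lam i ^ 3 < 0 := Odd.pow_neg (by decide) hneg
      have hcneg : 6 * lam i ^ 3 * x0 i ^ 2 < 0 :=
        mul_neg_of_neg_of_pos (by nlinarith) (pow_pos (hx0 i) 2)
      have hd := div_lt_div_of_pos_left (neg_pos.mpr hcneg) (pow_pos hub 4) h4
      rw [neg_div, neg_div, neg_lt_neg_iff] at hd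
      exact hd
    · have hlt : 1 + a * lam i < 1 + b * lam i := by nlinarith
      have h4 : (1 + a * lam i) ^ 4 < (1 + b * lam i) ^ 4 :=
        pow_lt_pow_left₀ hlt hua.le (by norm_num)
      have hcpos : 0 < 6 * lam i ^ 3 * x0 i ^ 2 :=
        mul_pos (by nlinarith [pow_pos hposi 3]) (pow_pos (hx0 i) 2)
      exact div_lt_div_of_pos_left hcpos (pow_pos hua 4) h4
  -- continuity of g on interval
  have hcont : ContinuousOn g (Set.Ioo e1 e2) := by
    refine continuousOn_finset_sum _ fun i _ => ContinuousOn.div continuousOn_const ?_ ?_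
    · exact ((continuous_const.add (continuous_id.mul continuous_const)).pow 4).continuousOn
    · intro μ hμ
      exact pow_ne_zero 4 (hpos μ hμ i).ne'
  -- tendsto atTop at e1
  have hF1 : (nhdsWithin e1 (Set.Ioo e1 e2)).NeBot := by
    apply mem_closure_iff_nhdsWithin_neBot.mp
    rw [closure_Ioo he12.ne]
    exact ⟨le_refl _, he12.le⟩
  have hF2 : (nhdsWithin e2 (Set.Ioo e1 e2)).NeBot := by
    apply mem_closure_iff_nhdsWithin_neBot.mp
    rw [closure_Ioo he12.ne]
    exact ⟨he12.le, le_refl _⟩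
  have hmem1 : ∀ᶠ μ in nhdsWithin e1 (Set.Ioo e1 e2), μ ∈ Set.Ioo e1 e2 :=
    eventually_mem_nhdsWithin
  have hmem2 : ∀ᶠ μ in nhdsWithin e2 (Set.Ioo e1 e2), μ ∈ Set.Ioo e1 e2 :=
    eventually_mem_nhdsWithin
  -- main term tendsto atTop near e1
  have hmain1 : Tendsto (fun μ => 6 * lam i0 ^ 3 * x0 i0 ^ 2 / (1 + μ * lam i0) ^ 4)
      (nhdsWithin e1 (Set.Ioo e1 e2)) atTop := by
    have hd0 : Tendsto (fun μ : ℝ => (1 + μ * lam i0) ^ 4)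
        (nhdsWithin e1 (Set.Ioo e1 e2)) (nhdsWithin 0 (Set.Ioi 0)) := by
      apply tendsto_nhdsWithin_of_tendsto_nhds_of_eventually_within
      · have hc : Continuous (fun μ : ℝ => (1 + μ * lam i0) ^ 4) :=
          (continuous_const.add (continuous_id.mul continuous_const)).pow 4
        have h0 : (1 + e1 * lam i0) ^ 4 = 0 := by
          rw [he1def]
          field_simp
          norm_num
        have ht := hc.tendsto e1
        rw [h0] at ht
        exact ht.mono_left nhdsWithin_le_nhds
      · filter_upwards [hmem1] with μ hμ
        exact pow_pos (hpos μ hμ i0) 4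
    have hinv := tendsto_inv_nhdsGT_zero.comp hd0
    have hc : 0 < 6 * lam i0 ^ 3 * x0 i0 ^ 2 :=
      mul_pos (by nlinarith [pow_pos hfirst 3]) (pow_pos (hx0 i0) 2)
    have := hinv.const_mul_atTop hc
    simpa [div_eq_mul_inv, Function.comp] using this
  -- lower bounds near e1
  have hrest1 : ∀ i : Fin n, ∃ C : ℝ, ∀ᶠ μ in nhdsWithin e1 (Set.Ioo e1 e2),
      C ≤ 6 * lam i ^ 3 * x0 i ^ 2 / (1 + μ * lam i) ^ 4 := by
    intro i
    rcases (hne i).lt_or_gt with hneg | hposi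
    · have hd : 0 < 1 + e1 * lam i := by
        nlinarith [mul_pos (neg_pos.mpr he1) (neg_pos.mpr hneg)]
      refine ⟨6 * lam i ^ 3 * x0 i ^ 2 / (1 + e1 * lam i) ^ 4 - 1, ?_⟩
      have hc : ContinuousAt (fun μ : ℝ => 6 * lam i ^ 3 * x0 i ^ 2 / (1 + μ * lam i) ^ 4) e1 :=
        ContinuousAt.div continuousAt_const
          (((continuous_const.add (continuous_id.mul continuous_const)).pow 4).continuousAt)
          (pow_ne_zero 4 hd.ne')
      exact (hc.tendsto.mono_left nhdsWithin_le_nhds).eventually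
        (eventually_ge_nhds (by linarith))
    · refine ⟨0, ?_⟩
      filter_upwards [hmem1] with μ hμ
      exact le_of_lt (div_pos (mul_pos (by nlinarith [pow_pos hposi 3]) (pow_pos (hx0 i) 2))
        (pow_pos (hpos μ hμ i) 4))
  choose C1 hC1 using hrest1
  have htop : Tendsto g (nhdsWithin e1 (Set.Ioo e1 e2)) atTop := by
    refine tendsto_atTop_mono' _ ?_
      (tendsto_atTop_add_const_right _ (∑ i ∈ Finset.univ.erase i0, C1 i) hmain1)
    filter_upwards [Filter.eventually_all.mpr hC1] with μ hμ
    calc 6 * lam i0 ^ 3 * x0 i0 ^ 2 / (1 + μ * lam i0) ^ 4 + ∑ i ∈ Finset.univ.erase i0, C1 i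
        ≤ 6 * lam i0 ^ 3 * x0 i0 ^ 2 / (1 + μ * lam i0) ^ 4 +
          ∑ i ∈ Finset.univ.erase i0, 6 * lam i ^ 3 * x0 i ^ 2 / (1 + μ * lam i) ^ 4 := by
          gcongr with i hi
          exact hμ i
      _ = g μ := by
          simp only [hgdef]
          exact Finset.add_sum_erase Finset.univ (fun i => 6 * lam i ^ 3 * x0 i ^ 2 / (1 + μ * lam i) ^ 4) (Finset.mem_univ i0)
  -- main term tendsto atBot near e2
  have hmainN : Tendsto (fun μ => 6 * lam iN ^ 3 * x0 iN ^ 2 / (1 + μ * lam iN) ^ 4)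
      (nhdsWithin e2 (Set.Ioo e1 e2)) atBot := by
    have hd0 : Tendsto (fun μ : ℝ => (1 + μ * lam iN) ^ 4)
        (nhdsWithin e2 (Set.Ioo e1 e2)) (nhdsWithin 0 (Set.Ioi 0)) := by
      apply tendsto_nhdsWithin_of_tendsto_nhds_of_eventually_within
      · have hc : Continuous (fun μ : ℝ => (1 + μ * lam iN) ^ 4) :=
          (continuous_const.add (continuous_id.mul continuous_const)).pow 4
        have h0 : (1 + e2 * lam iN) ^ 4 = 0 := by
          rw [he2def]
          rw [div_mul_cancel₀ _ (hne iN)]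
          norm_num
        have ht := hc.tendsto e2
        rw [h0] at ht
        exact ht.mono_left nhdsWithin_le_nhds
      · filter_upwards [hmem2] with μ hμ
        exact pow_pos (hpos μ hμ iN) 4
    have hinv := tendsto_inv_nhdsGT_zero.comp hd0
    have hl3 : lam iN ^ 3 < 0 := Odd.pow_neg (by decide) hlast
    have hc : 6 * lam iN ^ 3 * x0 iN ^ 2 < 0 :=
      mul_neg_of_neg_of_pos (by nlinarith) (pow_pos (hx0 iN) 2)
    have := (tendsto_const_mul_atBot_of_neg hc).mpr hinv
    simpa [div_eq_mul_inv, Function.comp] using this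
  -- upper bounds near e2
  have hrest2 : ∀ i : Fin n, ∃ C : ℝ, ∀ᶠ μ in nhdsWithin e2 (Set.Ioo e1 e2),
      6 * lam i ^ 3 * x0 i ^ 2 / (1 + μ * lam i) ^ 4 ≤ C := by
    intro i
    rcases (hne i).lt_or_gt with hneg | hposi
    · refine ⟨0, ?_⟩
      filter_upwards [hmem2] with μ hμ
      have hl3 : lam i ^ 3 < 0 := Odd.pow_neg (by decide) hneg
      exact le_of_lt (div_neg_of_neg_of_pos
        (mul_neg_of_neg_of_pos (by nlinarith) (pow_pos (hx0 i) 2)) (pow_pos (hpos μ hμ i) 4))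
    · have hd : 0 < 1 + e2 * lam i := by nlinarith [mul_pos he2 hposi]
      refine ⟨6 * lam i ^ 3 * x0 i ^ 2 / (1 + e2 * lam i) ^ 4 + 1, ?_⟩
      have hc : ContinuousAt (fun μ : ℝ => 6 * lam i ^ 3 * x0 i ^ 2 / (1 + μ * lam i) ^ 4) e2 :=
        ContinuousAt.div continuousAt_const
          (((continuous_const.add (continuous_id.mul continuous_const)).pow 4).continuousAt)
          (pow_ne_zero 4 hd.ne')
      exact (hc.tendsto.mono_left nhdsWithin_le_nhds).eventually
        (eventually_le_nhds (by linarith))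
  choose C2 hC2 using hrest2
  have hbot : Tendsto g (nhdsWithin e2 (Set.Ioo e1 e2)) atBot := by
    refine tendsto_atBot_mono' _ ?_
      (tendsto_atBot_add_const_right _ (∑ i ∈ Finset.univ.erase iN, C2 i) hmainN)
    filter_upwards [Filter.eventually_all.mpr hC2] with μ hμ
    calc g μ = 6 * lam iN ^ 3 * x0 iN ^ 2 / (1 + μ * lam iN) ^ 4 +
          ∑ i ∈ Finset.univ.erase iN, 6 * lam i ^ 3 * x0 i ^ 2 / (1 + μ * lam i) ^ 4 :=
          by
          simp only [hgdef]
          exact (Finset.add_sum_erase Finset.univ (fun i => 6 * lam i ^ 3 * x0 i ^ 2 / (1 + μ * lam i) ^ 4) (Finset.mem_univ iN)).symm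
      _ ≤ 6 * lam iN ^ 3 * x0 iN ^ 2 / (1 + μ * lam iN) ^ 4 +
          ∑ i ∈ Finset.univ.erase iN, C2 i := by
          gcongr with i hi
          exact hμ i
  -- sign change points
  obtain ⟨p, hgp, hp⟩ := ((htop.eventually_gt_atTop 0).and hmem1).exists
  obtain ⟨q, hgq, hq⟩ := ((hbot.eventually_lt_atBot 0).and hmem2).exists
  have hpq : p < q := by
    rcases lt_trichotomy p q with h | h | h
    · exact h
    · exact absurd (h ▸ hgp) (by simp [hgq.le, not_lt.mpr hgq.le])
    · exact absurd (hanti hq hp h) (by linarith)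
  have hsub : Set.Icc p q ⊆ Set.Ioo e1 e2 := Set.Icc_subset_Ioo hp.1 hq.2
  have hivt := intermediate_value_Icc' hpq.le (hcont.mono hsub)
  obtain ⟨μI, hμI, hgI⟩ := hivt ⟨hgq.le, hgp.le⟩
  have hμImem : μI ∈ Set.Ioo e1 e2 := hsub hμI
  refine ⟨μI, ⟨hμImem, by rw [hdd μI hμImem]; exact hgI⟩, ?_⟩
  rintro ν ⟨hν, hν0⟩
  have hgν : g ν = 0 := by rw [← hdd ν hν]; exact hν0
  exact hanti.injOn hν hμImem (by rw [hgν, hgI])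
end

section
/- Let λ ∈ ℝ^n with λ_1 > 0 and x⁰ ∈ ℝ^n with x⁰ ≥ 0 componentwise. Then there exists a global minimizer x* of ‖x − x⁰‖² over {x : Σ_i λ_i x_i² = 1} with x* ≥ 0 componentwise. -/
theorem stmt_11 (n : ℕ) (hn : 0 < n) (lam x0 : Fin n → ℝ)
    (hsort : ∀ i j : Fin n, i ≤ j → lam j ≤ lam i)
    (hfirst : 0 < lam ⟨0, hn⟩) (hx0 : ∀ i, 0 ≤ x0 i) :
    ∃ xs : Fin n → ℝ, (∑ i, lam i * xs i ^ 2 = 1) ∧ (∀ i, 0 ≤ xs i) ∧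
      ∀ x : Fin n → ℝ, (∑ i, lam i * x i ^ 2 = 1) →
        ∑ i, (xs i - x0 i) ^ 2 ≤ ∑ i, (x i - x0 i) ^ 2 := by
  set i0 : Fin n := ⟨0, hn⟩
  set f : (Fin n → ℝ) → ℝ := fun x => ∑ i, (x i - x0 i) ^ 2 with hf
  set S : Set (Fin n → ℝ) := {x | ∑ i, lam i * x i ^ 2 = 1} with hS
  have hfc : Continuous f := by
    apply continuous_finset_sum
    intro i _
    exact ((continuous_apply i).sub continuous_const).pow 2
  have hScl : IsClosed S := by
    have : Continuous fun x : Fin n → ℝ => ∑ i, lam i * x i ^ 2 := by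
      apply continuous_finset_sum
      intro i _
      exact continuous_const.mul ((continuous_apply i).pow 2)
    exact isClosed_eq this continuous_const
  -- a feasible point
  set p : Fin n → ℝ := fun i => if i = i0 then 1 / Real.sqrt (lam i0) else 0 with hp
  have hpS : p ∈ S := by
    have hs : Real.sqrt (lam i0) ^ 2 = lam i0 := Real.sq_sqrt hfirst.le
    have hs0 : Real.sqrt (lam i0) ≠ 0 := by positivity
    simp only [hS, Set.mem_setOf_eq, hp]
    rw [Finset.sum_eq_single i0]
    · rw [if_pos rfl]
      field_simp
      exact hs.symm
    · intro b _ hb; rw [if_neg hb]; ring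
    · intro h; exact absurd (Finset.mem_univ i0) h
  -- lower bound: f x ≥ dist x x0 ^ 2
  have key : ∀ x : Fin n → ℝ, dist x x0 ^ 2 ≤ f x := by
    intro x
    have h1 : dist x x0 ≤ Real.sqrt (f x) := by
      rw [dist_pi_le_iff (Real.sqrt_nonneg _)]
      intro i
      rw [Real.dist_eq]
      have : (x i - x0 i) ^ 2 ≤ f x := by
        apply Finset.single_le_sum (fun j _ => sq_nonneg (x j - x0 j)) (Finset.mem_univ i)
      calc |x i - x0 i| = Real.sqrt ((x i - x0 i) ^ 2) := (Real.sqrt_sq_eq_abs _).symm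
        _ ≤ Real.sqrt (f x) := Real.sqrt_le_sqrt this
    calc dist x x0 ^ 2 ≤ Real.sqrt (f x) ^ 2 := by
          apply pow_le_pow_left₀ dist_nonneg h1
      _ = f x := Real.sq_sqrt (Finset.sum_nonneg fun j _ => sq_nonneg _)
  set R := Real.sqrt (f p) with hR
  have hRnn : 0 ≤ R := Real.sqrt_nonneg _
  have hR2 : R ^ 2 = f p := Real.sq_sqrt (Finset.sum_nonneg fun j _ => sq_nonneg _)
  set K : Set (Fin n → ℝ) := S ∩ Metric.closedBall x0 R with hK
  have hKcomp : IsCompact K := (isCompact_closedBall x0 R).inter_left hScl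
  have hpK : p ∈ K := by
    refine ⟨hpS, ?_⟩
    rw [Metric.mem_closedBall]
    have := key p
    nlinarith [dist_nonneg (x := p) (y := x0)]
  obtain ⟨xm, hxmK, hxmin⟩ := hKcomp.exists_isMinOn ⟨p, hpK⟩ hfc.continuousOn
  -- xm minimizes over all of S
  have hmin : ∀ x ∈ S, f xm ≤ f x := by
    intro x hx
    by_cases hxb : x ∈ Metric.closedBall x0 R
    · exact hxmin ⟨hx, hxb⟩
    · have h1 : R < dist x x0 := by
        rw [Metric.mem_closedBall, not_le] at hxb; exact hxb
      have h2 : f p < f x := by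
        have := key x
        nlinarith
      exact le_of_lt (lt_of_le_of_lt (hxmin hpK) h2)
  -- take absolute values
  refine ⟨fun i => |xm i|, ?_, fun i => abs_nonneg _, ?_⟩
  · have := hxmK.1
    simp only [hS, Set.mem_setOf_eq] at this
    rw [← this]
    exact Finset.sum_congr rfl fun i _ => by rw [sq_abs]
  · intro x hx
    have h1 : f xm ≤ f x := hmin x hx
    have h2 : ∑ i, (|xm i| - x0 i) ^ 2 ≤ f xm := by
      apply Finset.sum_le_sum
      intro i _
      nlinarith [mul_le_mul_of_nonneg_right (le_abs_self (xm i)) (hx0 i), sq_abs (xm i)]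
    exact le_trans h2 h1
end
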